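/- For a multiple-input-multiple-output cyclic convolution operator W with kernels w_{i,j} (linking input channel j to output channel i), the sparsity-aware norm ‖W‖_{0,∞} := sup over inputs x with at most one nonzero channel and each channel of Euclidean norm at most 1 of the maximal output-channel Euclidean norm of Wx, equals max_{i,j} ‖F{w_{i,j}}‖_∞, the largest absolute value over all entries of the discrete Fourier transforms of the kernels. -/

import Mathlib

open scoped BigOperators

/-- Euclidean (ℓ²) norm of a signal on `ZMod N`. -/
noncomputable def enorm2 {N : ℕ} [NeZero N] (x : ZMod N → ℂ) : ℝ :=
  Real.sqrt (∑ t, ‖x t‖ ^ 2)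

/-- Cyclic convolution on `ZMod N`. -/
noncomputable def cconv {N : ℕ} [NeZero N] (h x : ZMod N → ℂ) : ZMod N → ℂ :=
  fun t => ∑ s, h s * x (t - s)

/-- Discrete Fourier transform on `ZMod N`. -/
noncomputable def dft {N : ℕ} [NeZero N] (h : ZMod N → ℂ) : ZMod N → ℂ :=
  fun k => ∑ t, h t * Complex.exp (-2 * Real.pi * Complex.I * (k.val * t.val) / N)

/-- The MIMO cyclic convolution operator with kernels `w i j`. -/
noncomputable def mimo {N m n : ℕ} [NeZero N] (w : Fin m → Fin n → ZMod N → ℂ)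
    (x : Fin n → ZMod N → ℂ) : Fin m → ZMod N → ℂ :=
  fun i => ∑ j, cconv (w i j) (x j)

section AuxDFT

variable {N : ℕ} [NeZero N]

noncomputable def E {N : ℕ} [NeZero N] (a : ZMod N) : ℂ :=
  Complex.exp (-2 * Real.pi * Complex.I * a.val / N)

lemma E_def'' {N : ℕ} [NeZero N] (a : ZMod N) :
    E a = Complex.exp (-2 * Real.pi * Complex.I * a.val / N) := rfl

lemma E_nat (a : ℕ) :
    Complex.exp (-2 * Real.pi * Complex.I * a / N) = E (a : ZMod N) := by
  have hN : (N : ℂ) ≠ 0 := by exact_mod_cast (NeZero.ne N)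
  have hval : ((a : ZMod N)).val = a % N := ZMod.val_natCast N a
  obtain ⟨q, r, hqr⟩ : ∃ q r : ℕ, a = r + N * q := ⟨a / N, a % N, by
    rw [Nat.mod_add_div a N]⟩
  have hr : a % N = r % N := by rw [hqr]; simp [Nat.add_mul_mod_self_left]
  have ha : (a : ℂ) = (r : ℂ) + (N : ℂ) * q := by rw [hqr]; push_cast; ring
  rw [E, hval, hr, ha]
  rw [show -2 * (Real.pi:ℂ) * Complex.I * ((r:ℂ) + (N : ℂ) * q) / N
      = -2 * (Real.pi:ℂ) * Complex.I * (r:ℂ) / N + ((-(q:ℤ) : ℤ) * (2 * Real.pi * Complex.I)) by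
    field_simp; push_cast; ring]
  rw [Complex.exp_add, Complex.exp_int_mul_two_pi_mul_I, mul_one]
  obtain ⟨q2, hq2⟩ : ∃ q2 : ℕ, r = r % N + N * q2 := ⟨r / N, by rw [Nat.mod_add_div r N]⟩
  rw [show (r : ℂ) = ((r % N : ℕ) : ℂ) + (N:ℂ) * q2 by
    conv_lhs => rw [hq2]
    push_cast; ring]
  rw [show -2 * (Real.pi:ℂ) * Complex.I * (((r % N : ℕ) : ℂ) + (N:ℂ) * q2) / N
      = -2 * (Real.pi:ℂ) * Complex.I * ((r % N : ℕ):ℂ) / N + ((-(q2:ℤ) : ℤ) * (2 * Real.pi * Complex.I)) by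
    field_simp; push_cast; ring]
  rw [Complex.exp_add, Complex.exp_int_mul_two_pi_mul_I, mul_one]

lemma E_def' (a : ZMod N) :
    E a = Complex.exp (-2 * Real.pi * Complex.I * a.val / N) := rfl

lemma E_zero : E (0 : ZMod N) = 1 := by
  simp [E, ZMod.val_zero]

lemma E_add (a b : ZMod N) : E (a + b) = E a * E b := by
  have h1 : ((a.val + b.val : ℕ) : ZMod N) = a + b := by
    push_cast [ZMod.natCast_val]; simp [ZMod.cast_id]
  rw [← h1, ← E_nat]
  rw [E_def', E_def', ← Complex.exp_add]
  congr 1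
  push_cast
  ring

lemma norm_E (a : ZMod N) : ‖E a‖ = 1 := by
  have : -2 * (Real.pi:ℂ) * Complex.I * a.val / N
      = ((-2 * Real.pi * a.val / N : ℝ) : ℂ) * Complex.I := by push_cast; ring
  rw [E, this, Complex.norm_exp]
  simp

lemma conj_E (a : ZMod N) : (starRingEnd ℂ) (E a) = E (-a) := by
  have h1 : E a * E (-a) = 1 := by rw [← E_add]; simp [E_zero]
  have h2 : E a * (starRingEnd ℂ) (E a) = 1 := by
    rw [Complex.mul_conj']
    norm_cast
    rw [norm_E]; norm_num
  have hne : E a ≠ 0 := by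
    intro h; rw [h, zero_mul] at h1; exact one_ne_zero h1.symm
  exact mul_left_cancel₀ hne (h2.trans h1.symm)
lemma E_ne_one {a : ZMod N} (ha : a ≠ 0) : E a ≠ 1 := by
  intro h
  rw [E_def', Complex.exp_eq_one_iff] at h
  obtain ⟨n, hn⟩ := h
  have hN : (N : ℂ) ≠ 0 := by exact_mod_cast (NeZero.ne N)
  have hpi : (2 * Real.pi * Complex.I : ℂ) ≠ 0 :=
    mul_ne_zero (mul_ne_zero two_ne_zero (by exact_mod_cast Real.pi_ne_zero)) Complex.I_ne_zero
  have hA : (2 * Real.pi * Complex.I) * (-(a.val:ℂ)) = (2 * Real.pi * Complex.I) * ((n:ℂ) * N) := by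
    field_simp at hn
    linear_combination (2 * Real.pi * Complex.I) * hn
  have h2 : (-(a.val:ℂ)) = (n:ℂ) * N := mul_left_cancel₀ hpi hA
  have h3 : (-(a.val : ℤ)) = n * N := by exact_mod_cast h2
  have hlt : a.val < N := ZMod.val_lt a
  have hvz : a.val ≠ 0 := fun hv => ha (by
    have := ZMod.natCast_rightInverse (n := N) a
    rw [← this, hv]; simp)
  rcases lt_or_ge n 0 with hn0 | hn0
  · have := mul_le_mul_of_nonneg_right (show n ≤ -1 by omega) (show (0:ℤ) ≤ N by positivity)
    omega
  · have := mul_nonneg hn0 (show (0:ℤ) ≤ N by positivity)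
    omega

lemma sum_E (c : ZMod N) :
    (∑ t : ZMod N, E (c * t)) = if c = 0 then (N : ℂ) else 0 := by
  split_ifs with hc
  · subst hc; simp [E_zero, ZMod.card]
  · have hshift : (∑ t : ZMod N, E (c * t)) = ∑ t : ZMod N, E (c * (t + 1)) :=
      (Fintype.sum_equiv (Equiv.addRight (1 : ZMod N)) _ _ (fun t => rfl)).symm
    have : (E c - 1) * (∑ t : ZMod N, E (c * t)) = 0 := by
      have : E c * (∑ t : ZMod N, E (c * t)) = ∑ t : ZMod N, E (c * t) := by
        conv_rhs => rw [hshift]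
        rw [Finset.mul_sum]
        refine Finset.sum_congr rfl fun t _ => ?_
        rw [← E_add]; ring_nf
      linear_combination this
    rcases mul_eq_zero.1 this with h | h
    · exact absurd (by linear_combination h) (E_ne_one hc)
    · exact h

lemma dft_eq (h : ZMod N → ℂ) (k : ZMod N) :
    dft h k = ∑ t, h t * E (k * t) := by
  refine Finset.sum_congr rfl fun t _ => ?_
  congr 1
  have h1 : ((k.val * t.val : ℕ) : ZMod N) = k * t := by
    push_cast [ZMod.natCast_val]
    simp [ZMod.cast_id]
  rw [← h1, ← E_nat]
  congr 1
  push_cast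
  ring
lemma dft_cconv (h x : ZMod N → ℂ) (k : ZMod N) :
    dft (cconv h x) k = dft h k * dft x k := by
  rw [dft_eq, dft_eq, dft_eq]
  simp only [cconv]
  rw [Finset.sum_mul_sum]
  rw [show (∑ t : ZMod N, (∑ s : ZMod N, h s * x (t - s)) * E (k * t))
      = ∑ s : ZMod N, ∑ t : ZMod N, h s * x (t - s) * E (k * t) by
    rw [Finset.sum_comm]
    exact Finset.sum_congr rfl fun t _ => Finset.sum_mul _ _ _]
  refine Finset.sum_congr rfl fun s _ => ?_
  rw [show (∑ t : ZMod N, h s * x (t - s) * E (k * t))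
      = ∑ u : ZMod N, h s * x u * E (k * (u + s)) from
    (Fintype.sum_equiv (Equiv.addRight s) _ _ (fun u => by simp)).symm]
  refine Finset.sum_congr rfl fun u _ => ?_
  rw [mul_add, E_add]
  ring

lemma parseval_c (x : ZMod N → ℂ) :
    (∑ k : ZMod N, dft x k * (starRingEnd ℂ) (dft x k))
      = (N : ℂ) * ∑ t : ZMod N, x t * (starRingEnd ℂ) (x t) := by
  have key : ∀ k : ZMod N, dft x k * (starRingEnd ℂ) (dft x k)
      = ∑ t : ZMod N, ∑ s : ZMod N, x t * (starRingEnd ℂ) (x s) * E (k * (t - s)) := by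
    intro k
    rw [dft_eq, map_sum, Finset.sum_mul_sum]
    refine Finset.sum_congr rfl fun t _ => Finset.sum_congr rfl fun s _ => ?_
    rw [map_mul, conj_E, show k * (t - s) = k * t + -(k * s) by ring, E_add]
    ring
  calc (∑ k : ZMod N, dft x k * (starRingEnd ℂ) (dft x k))
      = ∑ k : ZMod N, ∑ t : ZMod N, ∑ s : ZMod N,
          x t * (starRingEnd ℂ) (x s) * E (k * (t - s)) :=
        Finset.sum_congr rfl fun k _ => key k
    _ = ∑ t : ZMod N, ∑ s : ZMod N, x t * (starRingEnd ℂ) (x s)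
          * ∑ k : ZMod N, E ((t - s) * k) := by
        rw [Finset.sum_comm]
        refine Finset.sum_congr rfl fun t _ => ?_
        rw [Finset.sum_comm]
        refine Finset.sum_congr rfl fun s _ => ?_
        rw [Finset.mul_sum]
        exact Finset.sum_congr rfl fun k _ => by rw [mul_comm k (t-s)]
    _ = (N : ℂ) * ∑ t : ZMod N, x t * (starRingEnd ℂ) (x t) := by
        rw [Finset.mul_sum]
        refine Finset.sum_congr rfl fun t _ => ?_
        rw [Finset.sum_eq_single t]
        · rw [sum_E, if_pos (by simp)]; ring
        · intro s _ hs
          rw [sum_E, if_neg (by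
            intro hc; exact hs (by linear_combination -hc) ), mul_zero]
        · intro ht; exact absurd (Finset.mem_univ t) ht

lemma parseval (x : ZMod N → ℂ) :
    (∑ k : ZMod N, ‖dft x k‖ ^ 2) = (N : ℝ) * ∑ t : ZMod N, ‖x t‖ ^ 2 := by
  have := parseval_c x
  simp only [Complex.mul_conj'] at this
  have h2 : ((∑ k : ZMod N, ‖dft x k‖ ^ 2 : ℝ) : ℂ)
      = (((N : ℝ) * ∑ t : ZMod N, ‖x t‖ ^ 2 : ℝ) : ℂ) := by
    push_cast
    exact this
  exact_mod_cast h2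
lemma enorm2_nonneg (x : ZMod N → ℂ) : 0 ≤ enorm2 x := Real.sqrt_nonneg _

lemma enorm2_sq (x : ZMod N → ℂ) : enorm2 x ^ 2 = ∑ t, ‖x t‖ ^ 2 := by
  rw [enorm2, Real.sq_sqrt]
  positivity

lemma cconv_zero (h : ZMod N → ℂ) : cconv h (0 : ZMod N → ℂ) = 0 := by
  funext t; simp [cconv]

lemma enorm2_const_mul (c : ℂ) (f : ZMod N → ℂ) :
    enorm2 (fun t => c * f t) = ‖c‖ * enorm2 f := by
  rw [enorm2, enorm2]
  rw [show (∑ t : ZMod N, ‖c * f t‖ ^ 2) = ‖c‖^2 * ∑ t : ZMod N, ‖f t‖ ^ 2 by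
    rw [Finset.mul_sum]
    exact Finset.sum_congr rfl fun t _ => by rw [norm_mul]; ring]
  rw [Real.sqrt_mul (by positivity), Real.sqrt_sq (norm_nonneg c)]

lemma cconv_le (h x : ZMod N → ℂ) :
    enorm2 (cconv h x) ≤ (⨆ k : ZMod N, ‖dft h k‖) * enorm2 x := by
  set M := ⨆ k : ZMod N, ‖dft h k‖ with hM
  have hMk : ∀ k, ‖dft h k‖ ≤ M :=
    fun k => le_ciSup (f := fun k => ‖dft h k‖) (Set.Finite.bddAbove (Set.finite_range _)) k
  have hM0 : 0 ≤ M := le_trans (norm_nonneg _) (hMk 0)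
  have hNpos : (0 : ℝ) < N := by
    have := Nat.pos_of_ne_zero (NeZero.ne N); exact_mod_cast this
  have key : (N:ℝ) * ∑ t, ‖cconv h x t‖ ^ 2 ≤ (N:ℝ) * (M^2 * ∑ t, ‖x t‖ ^ 2) := by
    rw [← parseval]
    calc (∑ k : ZMod N, ‖dft (cconv h x) k‖ ^ 2)
        = ∑ k : ZMod N, ‖dft h k‖^2 * ‖dft x k‖ ^ 2 := by
          refine Finset.sum_congr rfl fun k _ => ?_
          rw [dft_cconv, norm_mul]; ring
      _ ≤ ∑ k : ZMod N, M^2 * ‖dft x k‖ ^ 2 := by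
          refine Finset.sum_le_sum fun k _ => ?_
          have h1 := hMk k
          have h2 : ‖dft h k‖^2 ≤ M^2 := by nlinarith [norm_nonneg (dft h k)]
          exact mul_le_mul_of_nonneg_right h2 (by positivity)
      _ = M^2 * ∑ k : ZMod N, ‖dft x k‖ ^ 2 := by rw [Finset.mul_sum]
      _ = M^2 * ((N:ℝ) * ∑ t, ‖x t‖ ^ 2) := by rw [parseval]
      _ = (N:ℝ) * (M^2 * ∑ t, ‖x t‖ ^ 2) := by ring
  have key2 : (∑ t, ‖cconv h x t‖ ^ 2) ≤ M^2 * ∑ t, ‖x t‖ ^ 2 :=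
    le_of_mul_le_mul_left (by simpa [mul_comm] using key) hNpos
  calc enorm2 (cconv h x) = Real.sqrt (∑ t, ‖cconv h x t‖ ^ 2) := rfl
    _ ≤ Real.sqrt (M^2 * ∑ t, ‖x t‖ ^ 2) := Real.sqrt_le_sqrt key2
    _ = M * enorm2 x := by
        rw [Real.sqrt_mul (by positivity), Real.sqrt_sq hM0, enorm2]

noncomputable def chi {N : ℕ} [NeZero N] (k0 : ZMod N) : ZMod N → ℂ :=
  fun t => E (-(k0 * t)) * ((Real.sqrt N : ℝ) : ℂ)⁻¹

lemma sqrtN_pos : (0:ℝ) < Real.sqrt N := by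
  have : (0:ℝ) < N := by exact_mod_cast Nat.pos_of_ne_zero (NeZero.ne N)
  positivity

lemma chi_ne_zero (k0 : ZMod N) : chi k0 ≠ 0 := by
  intro hc
  have h0 : chi k0 0 = 0 := by rw [hc]; rfl
  rw [chi] at h0
  simp only [mul_zero, neg_zero, E_zero, one_mul, inv_eq_zero] at h0
  have hs := sqrtN_pos (N := N)
  have hz : (Real.sqrt N : ℝ) = 0 := by exact_mod_cast h0
  linarith

lemma enorm2_chi (k0 : ZMod N) : enorm2 (chi k0) = 1 := by
  have hs := sqrtN_pos (N := N)
  have hNpos : (0 : ℝ) < N := by exact_mod_cast Nat.pos_of_ne_zero (NeZero.ne N)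
  have h1 : (∑ t : ZMod N, ‖chi k0 t‖ ^ 2) = ∑ t : ZMod N, (N:ℝ)⁻¹ := by
    refine Finset.sum_congr rfl fun t _ => ?_
    rw [chi, norm_mul, norm_E, norm_inv, one_mul, Complex.norm_real,
      Real.norm_of_nonneg hs.le, inv_pow, Real.sq_sqrt hNpos.le]
  have h2 : (∑ t : ZMod N, ‖chi k0 t‖ ^ 2) = 1 := by
    rw [h1]
    simp only [Finset.sum_const, Finset.card_univ, ZMod.card, nsmul_eq_mul]
    field_simp
  rw [enorm2, h2]
  exact Real.sqrt_one

lemma cconv_chi (h : ZMod N → ℂ) (k0 : ZMod N) :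
    cconv h (chi k0) = fun t => dft h k0 * chi k0 t := by
  funext t
  rw [cconv, dft_eq, Finset.sum_mul]
  refine Finset.sum_congr rfl fun s _ => ?_
  rw [chi, chi, show -(k0 * (t - s)) = k0 * s + -(k0 * t) by ring, E_add]
  ring

lemma enorm2_cconv_chi (h : ZMod N → ℂ) (k0 : ZMod N) :
    enorm2 (cconv h (chi k0)) = ‖dft h k0‖ := by
  rw [cconv_chi, enorm2_const_mul, enorm2_chi, mul_one]
lemma enorm2_zero : enorm2 (0 : ZMod N → ℂ) = 0 := by simp [enorm2]

end AuxDFT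

/-- The sparsity-aware norm `‖W‖_{0,∞}` of a MIMO cyclic convolution equals the
largest absolute value of the Fourier coefficients of its kernels. -/
theorem san_norm_eq_max_dft {N m n : ℕ} [NeZero N] (hm : 0 < m) (hn : 0 < n)
    (w : Fin m → Fin n → ZMod N → ℂ) :
    sSup ((fun x : Fin n → ZMod N → ℂ => ⨆ i : Fin m, enorm2 (mimo w x i)) ''
        {x | {j | x j ≠ 0}.ncard ≤ 1 ∧ ∀ j, enorm2 (x j) ≤ 1}) =
      ⨆ i : Fin m, ⨆ j : Fin n, ⨆ k : ZMod N, ‖dft (w i j) k‖ := by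
  haveI : Nonempty (Fin m) := ⟨⟨0, hm⟩⟩
  haveI : Nonempty (Fin n) := ⟨⟨0, hn⟩⟩
  set M := ⨆ i : Fin m, ⨆ j : Fin n, ⨆ k : ZMod N, ‖dft (w i j) k‖ with hMdef
  set S := ((fun x : Fin n → ZMod N → ℂ => ⨆ i : Fin m, enorm2 (mimo w x i)) ''
      {x | {j | x j ≠ 0}.ncard ≤ 1 ∧ ∀ j, enorm2 (x j) ≤ 1}) with hSdef
  have hbdd3 : ∀ i j k, ‖dft (w i j) k‖ ≤ M := by
    intro i j k
    calc ‖dft (w i j) k‖ ≤ ⨆ k : ZMod N, ‖dft (w i j) k‖ :=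
          le_ciSup (f := fun k => ‖dft (w i j) k‖)
            (Set.Finite.bddAbove (Set.finite_range _)) k
      _ ≤ ⨆ j : Fin n, ⨆ k : ZMod N, ‖dft (w i j) k‖ :=
          le_ciSup (f := fun j => ⨆ k : ZMod N, ‖dft (w i j) k‖)
            (Set.Finite.bddAbove (Set.finite_range _)) j
      _ ≤ M :=
          le_ciSup (f := fun i => ⨆ j : Fin n, ⨆ k : ZMod N, ‖dft (w i j) k‖)
            (Set.Finite.bddAbove (Set.finite_range _)) i
  have hM0 : 0 ≤ M := le_trans (norm_nonneg _) (hbdd3 ⟨0, hm⟩ ⟨0, hn⟩ 0)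
  -- upper bound
  have hub : ∀ y ∈ S, y ≤ M := by
    rintro y ⟨x, ⟨hx1, hx2⟩, rfl⟩
    refine ciSup_le fun i => ?_
    by_cases hx : ∀ j, x j = 0
    · have hz : mimo w x i = 0 := by
        show (∑ j, cconv (w i j) (x j)) = 0
        refine Finset.sum_eq_zero fun j _ => ?_
        rw [hx j, cconv_zero]
      rw [hz, enorm2_zero]; exact hM0
    · push_neg at hx
      obtain ⟨j0, hj0⟩ := hx
      have hzero : ∀ j, j ≠ j0 → x j = 0 := by
        intro j hj
        by_contra hxj
        have hsub : ({j0, j} : Set (Fin n)) ⊆ {j | x j ≠ 0} := by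
          rintro a (rfl | rfl) <;> simpa
        have h2 : ({j0, j} : Set (Fin n)).ncard = 2 := Set.ncard_pair (Ne.symm hj)
        have := Set.ncard_le_ncard hsub (Set.toFinite _)
        omega
      have hmim : mimo w x i = cconv (w i j0) (x j0) := by
        show (∑ j, cconv (w i j) (x j)) = cconv (w i j0) (x j0)
        refine Finset.sum_eq_single_of_mem j0 (Finset.mem_univ _) fun b _ hb => ?_
        rw [hzero b hb, cconv_zero]
      have hC0 : 0 ≤ ⨆ k : ZMod N, ‖dft (w i j0) k‖ :=
        le_trans (norm_nonneg _) (le_ciSup (f := fun k => ‖dft (w i j0) k‖)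
          (Set.Finite.bddAbove (Set.finite_range _)) 0)
      calc enorm2 (mimo w x i)
          = enorm2 (cconv (w i j0) (x j0)) := by rw [hmim]
        _ ≤ (⨆ k : ZMod N, ‖dft (w i j0) k‖) * enorm2 (x j0) := cconv_le _ _
        _ ≤ (⨆ k : ZMod N, ‖dft (w i j0) k‖) * 1 :=
            mul_le_mul_of_nonneg_left (hx2 j0) hC0
        _ = ⨆ k : ZMod N, ‖dft (w i j0) k‖ := mul_one _
        _ ≤ M := ciSup_le fun k => hbdd3 i j0 k
  have hSne : S.Nonempty := by
    refine ⟨⨆ i : Fin m, enorm2 (mimo w (0 : Fin n → ZMod N → ℂ) i), 0, ⟨?_, ?_⟩, rfl⟩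
    · simp
    · intro j
      show enorm2 (0 : ZMod N → ℂ) ≤ 1
      rw [enorm2_zero]; norm_num
  refine le_antisymm (csSup_le hSne hub) ?_
  -- lower bound
  refine ciSup_le fun i0 => ciSup_le fun j0 => ciSup_le fun k0 => ?_
  set x : Fin n → ZMod N → ℂ := fun j => if j = j0 then chi k0 else 0 with hxdef
  have hxmem : x ∈ {x : Fin n → ZMod N → ℂ |
      {j | x j ≠ 0}.ncard ≤ 1 ∧ ∀ j, enorm2 (x j) ≤ 1} := by
    constructor
    · have hsub : {j | x j ≠ 0} ⊆ ({j0} : Set (Fin n)) := by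
        intro j hj
        by_contra hjj
        simp only [Set.mem_singleton_iff] at hjj
        exact hj (by simp [hxdef, hjj])
      calc ({j | x j ≠ 0}).ncard ≤ ({j0} : Set (Fin n)).ncard :=
            Set.ncard_le_ncard hsub (Set.finite_singleton _)
        _ = 1 := Set.ncard_singleton _
    · intro j
      by_cases hj : j = j0
      · simp only [hxdef, if_pos hj]
        rw [enorm2_chi]
      · simp only [hxdef, if_neg hj]
        rw [enorm2_zero]; norm_num
  have hmim : mimo w x i0 = cconv (w i0 j0) (chi k0) := by
    show (∑ j, cconv (w i0 j) (x j)) = cconv (w i0 j0) (chi k0)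
    rw [Finset.sum_eq_single_of_mem j0 (Finset.mem_univ _) fun b _ hb => by
      simp only [hxdef, if_neg hb]; exact cconv_zero _]
    simp [hxdef]
  have h1 : ‖dft (w i0 j0) k0‖ = enorm2 (mimo w x i0) := by
    rw [hmim, enorm2_cconv_chi]
  rw [h1]
  have h2 : enorm2 (mimo w x i0) ≤ ⨆ i : Fin m, enorm2 (mimo w x i) :=
    le_ciSup (f := fun i => enorm2 (mimo w x i))
      (Set.Finite.bddAbove (Set.finite_range _)) i0
  refine le_trans h2 (le_csSup ⟨M, fun y hy => hub y hy⟩ ?_)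
  exact ⟨x, hxmem, rfl⟩
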